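/- Let x = P(x) be an LDF-PPS with least fixed point q* in [0,1]^n, and let y ∈ [0,1]^n with y < 1 in every coordinate. If P(y) ≤ y then y ≥ q*, and if P(y) ≥ y then y ≤ q*. In particular, if q* < 1 in every coordinate, then q* is the only fixed point q ∈ [0,1]^n of x = P(x) with q < 1 in every coordinate. -/

import Mathlib

open Filter Topology

/-- A probabilistic polynomial in `n` variables: `∑ r, p r * x ^ expo r`,
with nonnegative coefficients summing to at most 1. -/
structure ProbPoly (n : ℕ) where
  numTerms : ℕ
  p : Fin numTerms → ℝ
  expo : Fin numTerms → Fin n → ℕ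
  p_nonneg : ∀ r, 0 ≤ p r
  p_sum_le_one : ∑ r, p r ≤ 1

/-- Evaluation of a probabilistic polynomial. -/
def ProbPoly.eval {n : ℕ} (P : ProbPoly n) (x : Fin n → ℝ) : ℝ :=
  ∑ r, P.p r * ∏ i, x i ^ P.expo r i

/-- The unit box `[0,1]^n`. -/
def box01 (n : ℕ) : Set (Fin n → ℝ) := {x | ∀ i, 0 ≤ x i ∧ x i ≤ 1}

/-- The minimax value of the zero-sum matrix game with payoff matrix `B`:
`Val(B) = max_{s ∈ Δ_k} min_{t ∈ Δ_m} sᵀ B t`. -/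
noncomputable def gameVal {k m : ℕ} (B : Matrix (Fin k) (Fin m) ℝ) : ℝ :=
  ⨆ s : stdSimplex ℝ (Fin k), ⨅ t : stdSimplex ℝ (Fin m),
    ∑ i : Fin k, ∑ j : Fin m, s.1 i * B i j * t.1 j

/-- A probability distribution on `Fin k`. -/
def IsDist {k : ℕ} (d : Fin k → ℝ) : Prop := (∀ j, 0 ≤ d j) ∧ ∑ j, d j = 1

/-- `g` is the greatest fixed point of `F` in `[0,1]^n`. -/
def IsGFP {n : ℕ} (F : (Fin n → ℝ) → Fin n → ℝ) (g : Fin n → ℝ) : Prop :=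
  g ∈ box01 n ∧ F g = g ∧ ∀ g' ∈ box01 n, F g' = g' → g' ≤ g

/-- `q` is the least fixed point of `F` in `[0,1]^n`. -/
def IsLFP {n : ℕ} (F : (Fin n → ℝ) → Fin n → ℝ) (q : Fin n → ℝ) : Prop :=
  q ∈ box01 n ∧ F q = q ∧ ∀ q' ∈ box01 n, F q' = q' → q ≤ q'

/-- A minimax probabilistic polynomial system (minimax-PPS) in `n` variables:
for each `i`, an `nr i × nc i` matrix of probabilistic polynomials. -/
structure MinimaxPPS (n : ℕ) where
  nr : Fin n → ℕ
  nc : Fin n → ℕ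
  nr_pos : ∀ i, 0 < nr i
  nc_pos : ∀ i, 0 < nc i
  q : (i : Fin n) → Fin (nr i) → Fin (nc i) → ProbPoly n

namespace MinimaxPPS

/-- The payoff matrix `A_i(x)`. -/
noncomputable def A {n : ℕ} (P : MinimaxPPS n) (i : Fin n) (x : Fin n → ℝ) :
    Matrix (Fin (P.nr i)) (Fin (P.nc i)) ℝ :=
  Matrix.of fun j k => (P.q i j k).eval x

/-- `P(x)`: coordinatewise the value of the matrix game `A_i(x)`. -/
noncomputable def eval {n : ℕ} (P : MinimaxPPS n) (x : Fin n → ℝ) : Fin n → ℝ :=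
  fun i => gameVal (P.A i x)

/-- The minPPS `P_{σ,*}` obtained by fixing a mixed policy `σ` for the max player. -/
noncomputable def fixMax {n : ℕ} (P : MinimaxPPS n)
    (σ : (i : Fin n) → Fin (P.nr i) → ℝ) (x : Fin n → ℝ) : Fin n → ℝ :=
  fun i => ⨅ k : Fin (P.nc i), ∑ j, σ i j * (P.q i j k).eval x

/-- The maxPPS `P_{*,τ}` obtained by fixing a mixed policy `τ` for the min player. -/
noncomputable def fixMin {n : ℕ} (P : MinimaxPPS n)
    (τ : (i : Fin n) → Fin (P.nc i) → ℝ) (x : Fin n → ℝ) : Fin n → ℝ :=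
  fun i => ⨆ j : Fin (P.nr i), ∑ k, τ i k * (P.q i j k).eval x

/-- The PPS `P_{σ,τ}` obtained by fixing both policies. -/
def fixBoth {n : ℕ} (P : MinimaxPPS n)
    (σ : (i : Fin n) → Fin (P.nr i) → ℝ) (τ : (i : Fin n) → Fin (P.nc i) → ℝ)
    (x : Fin n → ℝ) : Fin n → ℝ :=
  fun i => ∑ j, ∑ k, σ i j * τ i k * (P.q i j k).eval x

end MinimaxPPS

/-- A PPS: each coordinate is a probabilistic polynomial. -/
structure PPS (n : ℕ) where
  poly : Fin n → ProbPoly n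

namespace PPS

def eval {n : ℕ} (P : PPS n) (x : Fin n → ℝ) : Fin n → ℝ := fun i => (P.poly i).eval x

/-- Edge of the dependency graph: `x_j` appears (with a nonzero coefficient) in `P_i(x)`. -/
def depends {n : ℕ} (P : PPS n) (i j : Fin n) : Prop :=
  ∃ r, (P.poly i).p r ≠ 0 ∧ (P.poly i).expo r j ≠ 0

end PPS

/-- A probabilistic polynomial is linear degenerate: every term with nonzero coefficient
has total degree exactly 1 (so it is linear with no constant term), and the
coefficients sum to exactly 1. -/
def IsLDPoly {n : ℕ} (Q : ProbPoly n) : Prop :=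
  (∀ r, Q.p r ≠ 0 → ∑ j, Q.expo r j = 1) ∧ ∑ r, Q.p r = 1

/-- There exists a bottom strongly connected component of the dependency relation `dep`
all of whose members satisfy `ld`. -/
def IsLDBottom {n : ℕ} (dep : Fin n → Fin n → Prop) (ld : Fin n → Prop) : Prop :=
  ∃ S : Set (Fin n), S.Nonempty ∧
    (∀ i ∈ S, ∀ j ∈ S, Relation.ReflTransGen dep i j) ∧
    (∀ i ∈ S, ∀ j, dep i j → j ∈ S) ∧
    (∀ i ∈ S, ld i)

/-- A PPS is linear degenerate free (LDF): no bottom strongly connected component of its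
dependency graph induces an LD subsystem. -/
def PPS.IsLDF {n : ℕ} (P : PPS n) : Prop :=
  ¬ IsLDBottom P.depends (fun i => IsLDPoly (P.poly i))

namespace MinimaxPPS

/-- Dependency relation of the PPS `P_{σ,τ}`. -/
def dependsMix {n : ℕ} (P : MinimaxPPS n) (σ : (i : Fin n) → Fin (P.nr i) → ℝ)
    (τ : (i : Fin n) → Fin (P.nc i) → ℝ) (i j : Fin n) : Prop :=
  ∃ a b r, σ i a ≠ 0 ∧ τ i b ≠ 0 ∧ (P.q i a b).p r ≠ 0 ∧ (P.q i a b).expo r j ≠ 0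

/-- Coordinate `i` of the PPS `P_{σ,τ}` is linear degenerate. -/
def IsLDMixAt {n : ℕ} (P : MinimaxPPS n) (σ : (i : Fin n) → Fin (P.nr i) → ℝ)
    (τ : (i : Fin n) → Fin (P.nc i) → ℝ) (i : Fin n) : Prop :=
  (∀ a b r, σ i a ≠ 0 → τ i b ≠ 0 → (P.q i a b).p r ≠ 0 → ∑ j, (P.q i a b).expo r j = 1) ∧
  (∑ a, ∑ b, σ i a * τ i b * ∑ r, (P.q i a b).p r) = 1

/-- A mixed min-player policy `τ` is LDF if for every mixed max-player policy `σ`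
the PPS `P_{σ,τ}` is an LDF-PPS. -/
def IsLDFPolicy {n : ℕ} (P : MinimaxPPS n) (τ : (i : Fin n) → Fin (P.nc i) → ℝ) : Prop :=
  ∀ σ : (i : Fin n) → Fin (P.nr i) → ℝ, (∀ i, IsDist (σ i)) →
    ¬ IsLDBottom (P.dependsMix σ τ) (P.IsLDMixAt σ τ)

end MinimaxPPS

/-- The three forms of equations in an SNF minimax-PPS. -/
inductive SNFForm | L | Q | M
  deriving DecidableEq

/-- A minimax-PPS in simple normal form (SNF): each coordinate is of form L
(linear, `a0 i + ∑ j, a i j * x j`), form Q (`x (quadL i) * x (quadR i)`), or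
form M (the value of a matrix game each of whose entries is a variable or the
constant 1, encoded by `Option (Fin n)` with `none` standing for `1`). -/
structure SNFPPS (n : ℕ) where
  form : Fin n → SNFForm
  a0 : Fin n → ℝ
  a : Fin n → Fin n → ℝ
  quadL : Fin n → Fin n
  quadR : Fin n → Fin n
  nr : Fin n → ℕ
  nc : Fin n → ℕ
  nr_pos : ∀ i, 0 < nr i
  nc_pos : ∀ i, 0 < nc i
  entry : (i : Fin n) → Fin (nr i) → Fin (nc i) → Option (Fin n)
  a0_nonneg : ∀ i, 0 ≤ a0 i
  a_nonneg : ∀ i j, 0 ≤ a i j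
  a_sum_le_one : ∀ i, a0 i + ∑ j, a i j ≤ 1

namespace SNFPPS

noncomputable def eval {n : ℕ} (P : SNFPPS n) (x : Fin n → ℝ) : Fin n → ℝ := fun i =>
  match P.form i with
  | SNFForm.L => P.a0 i + ∑ j, P.a i j * x j
  | SNFForm.Q => x (P.quadL i) * x (P.quadR i)
  | SNFForm.M => gameVal (Matrix.of fun j k => (P.entry i j k).elim 1 x)

/-- The maxPPS `P_{*,τ}` obtained by fixing a mixed policy `τ` for the min player. -/
noncomputable def fixMin {n : ℕ} (P : SNFPPS n)
    (τ : (i : Fin n) → Fin (P.nc i) → ℝ) (x : Fin n → ℝ) : Fin n → ℝ := fun i =>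
  match P.form i with
  | SNFForm.L => P.a0 i + ∑ j, P.a i j * x j
  | SNFForm.Q => x (P.quadL i) * x (P.quadR i)
  | SNFForm.M => ⨆ j : Fin (P.nr i), ∑ k, τ i k * (P.entry i j k).elim 1 x

/-- The minPPS `P_{σ,*}` obtained by fixing a mixed policy `σ` for the max player. -/
noncomputable def fixMax {n : ℕ} (P : SNFPPS n)
    (σ : (i : Fin n) → Fin (P.nr i) → ℝ) (x : Fin n → ℝ) : Fin n → ℝ := fun i =>
  match P.form i with
  | SNFForm.L => P.a0 i + ∑ j, P.a i j * x j
  | SNFForm.Q => x (P.quadL i) * x (P.quadR i)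
  | SNFForm.M => ⨅ k : Fin (P.nc i), ∑ j, σ i j * (P.entry i j k).elim 1 x

/-- `S` is closed under the rules defining the least closure set: it contains every
deficient form-L variable, and is closed under rules (a) and (b). -/
def Closed {n : ℕ} (P : SNFPPS n) (S : Set (Fin n)) : Prop :=
  (∀ i, P.form i = SNFForm.L → P.a0 i + ∑ j, P.a i j < 1 → i ∈ S) ∧
  (∀ i, P.form i = SNFForm.L → (∃ j ∈ S, P.a i j ≠ 0) → i ∈ S) ∧
  (∀ i, P.form i = SNFForm.Q → (P.quadL i ∈ S ∨ P.quadR i ∈ S) → i ∈ S) ∧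
  (∀ i, P.form i = SNFForm.M →
    (∀ r : Fin (P.nr i), ∃ c : Fin (P.nc i), ∃ v ∈ S, P.entry i r c = some v) → i ∈ S)

/-- The least closure set `S`. -/
def leastClosure {n : ℕ} (P : SNFPPS n) : Set (Fin n) := ⋂₀ {S | P.Closed S}

end SNFPPS

/-- Labels for the three sets in the limit-sure construction: `s` (the set `S ∪ {1}`),
`f` (the set `F`), and `o` (the remaining set `O`). -/
inductive Lab | s | f | o
  deriving DecidableEq


section Aux

open Finset


lemma chord_mul {t u v U V : ℝ} (ht0 : 0 ≤ t) (ht1 : t ≤ 1)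
    (hu0 : 0 ≤ u) (hu : u ≤ (1-t)*U + t) (hv0 : 0 ≤ v) (hv : v ≤ (1-t)*V + t)
    (hU0 : 0 ≤ U) (hU1 : U ≤ 1) (hV0 : 0 ≤ V) (hV1 : V ≤ 1) :
    u * v ≤ (1-t)*(U*V) + t := by
  nlinarith [mul_nonneg (mul_nonneg (mul_nonneg ht0 (by linarith : (0:ℝ) ≤ 1 - t)) (by linarith : (0:ℝ) ≤ 1 - U)) (by linarith : (0:ℝ) ≤ 1 - V),
    mul_le_mul hu hv hv0 (by nlinarith : (0:ℝ) ≤ (1-t)*U + t)]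

lemma powChord {t a : ℝ} (ht0 : 0 ≤ t) (ht1 : t ≤ 1) (ha0 : 0 ≤ a) (ha1 : a ≤ 1) :
    ∀ m : ℕ, (a + t*(1-a))^m ≤ (1-t)*a^m + t := by
  intro m
  induction m with
  | zero => simp
  | succ k ih =>
    have hx0 : (0:ℝ) ≤ a + t*(1-a) := by nlinarith
    have hx1 : a + t*(1-a) ≤ (1-t)*a + t := by ring_nf; nlinarith
    have := chord_mul ht0 ht1 (pow_nonneg hx0 k) ih hx0 hx1
      (pow_nonneg ha0 k) (pow_le_one₀ ha0 ha1) ha0 ha1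
    calc (a + t*(1-a))^(k+1) = (a + t*(1-a))^k * (a + t*(1-a)) := by ring
    _ ≤ (1-t)*(a^k * a) + t := this
    _ = (1-t)*a^(k+1) + t := by ring_nf

lemma prodChord {n : ℕ} {t : ℝ} (ht0 : 0 ≤ t) (ht1 : t ≤ 1) {q : Fin n → ℝ}
    (hq : ∀ j, 0 ≤ q j ∧ q j ≤ 1) (α : Fin n → ℕ) (s : Finset (Fin n)) :
    ∏ j ∈ s, (q j + t*(1 - q j))^(α j) ≤ (1-t) * ∏ j ∈ s, q j ^ α j + t := by
  classical
  induction s using Finset.induction_on with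
  | empty => simp
  | insert _ _ hni ih =>
    rename_i a s'
    rw [Finset.prod_insert hni, Finset.prod_insert hni]
    have hx0 : (0:ℝ) ≤ q a + t*(1-q a) := by nlinarith [(hq a).1, (hq a).2]
    exact chord_mul ht0 ht1 (pow_nonneg hx0 _) (powChord ht0 ht1 (hq a).1 (hq a).2 _)
      (Finset.prod_nonneg fun j _ => pow_nonneg (by nlinarith [(hq j).1, (hq j).2] : (0:ℝ) ≤ q j + t*(1-q j)) _) ih
      (pow_nonneg (hq a).1 _) (pow_le_one₀ (hq a).1 (hq a).2)
      (Finset.prod_nonneg fun j _ => pow_nonneg (hq j).1 _)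
      (Finset.prod_le_one (fun j _ => pow_nonneg (hq j).1 _) (fun j _ => pow_le_one₀ (hq j).1 (hq j).2))

lemma strict_combo {t A U u X δ : ℝ} (ht0 : 0 < t) (ht1 : t < 1)
    (hA0 : 0 ≤ A) (hA1 : A ≤ 1) (hU0 : 0 ≤ U) (hU1 : U ≤ 1)
    (hu0 : 0 ≤ u) (hu : u ≤ (1-t)*U + t) (hX0 : 0 ≤ X)
    (hX : X ≤ (1-t)*A + t - δ) (hδ : 0 < δ) :
    X * u < (1-t)*(A*U) + t := by
  have hS0 : (0:ℝ) < (1-t)*U + t := by nlinarith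
  have h1 : X * u ≤ X * ((1-t)*U + t) := by nlinarith
  have h2 : X * ((1-t)*U + t) ≤ ((1-t)*A + t - δ) * ((1-t)*U + t) := by nlinarith
  have h3 : ((1-t)*A + t) * ((1-t)*U + t) ≤ (1-t)*(A*U) + t := by
    nlinarith [mul_nonneg (mul_nonneg (mul_nonneg ht0.le (by linarith : (0:ℝ) ≤ 1 - t)) (by linarith : (0:ℝ) ≤ 1 - A)) (by linarith : (0:ℝ) ≤ 1 - U)]
  nlinarith

lemma prod_pow_indicator {n : ℕ} (x : Fin n → ℝ) (a : Fin n) :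
    ∏ j, x j ^ (if j = a then 1 else 0) = x a := by
  rw [Finset.prod_congr rfl (fun j _ => show x j ^ (if j = a then 1 else 0) = if j = a then x j else 1 by by_cases h : j = a <;> simp [h])]
  simp

lemma prodChord_strict {n : ℕ} {t : ℝ} (ht0 : 0 < t) (ht1 : t < 1) {q : Fin n → ℝ}
    (hq : ∀ j, 0 ≤ q j ∧ q j ≤ 1) (α' : Fin n → ℕ) (a b : Fin n)
    (hqa : q a < 1) (hqb : q b < 1) :
    ∏ j, (q j + t*(1 - q j))^(α' j + (if j = a then 1 else 0) + (if j = b then 1 else 0))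
      < (1-t) * ∏ j, q j ^ (α' j + (if j = a then 1 else 0) + (if j = b then 1 else 0)) + t := by
  have hdecomp : ∀ x : Fin n → ℝ,
      ∏ j, x j ^ (α' j + (if j = a then 1 else 0) + (if j = b then 1 else 0))
        = (∏ j, x j ^ α' j) * x a * x b := by
    intro x
    rw [Finset.prod_congr rfl (fun j _ => pow_add (x j) _ _),
        Finset.prod_congr rfl (fun j _ => congrArg (· * x j ^ (if j = b then 1 else 0)) (pow_add (x j) _ _)),
        Finset.prod_mul_distrib, Finset.prod_mul_distrib, prod_pow_indicator, prod_pow_indicator]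
  rw [hdecomp, hdecomp]
  set x : Fin n → ℝ := fun j => q j + t*(1 - q j) with hxdef
  have hx : ∀ j, 0 ≤ x j ∧ x j ≤ 1 := fun j =>
    ⟨show (0:ℝ) ≤ q j + t*(1 - q j) by nlinarith [(hq j).1, (hq j).2],
     show q j + t*(1 - q j) ≤ 1 by nlinarith [(hq j).1, (hq j).2]⟩
  have hXbound : x a * x b ≤ (1-t)*(q a * q b) + t - t*(1-t)*(1-q a)*(1-q b) := by
    have : (1-t)*(q a * q b) + t - (q a + t*(1-q a))*(q b + t*(1-q b)) = t*(1-t)*(1-q a)*(1-q b) := by ring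
    simp only [hxdef]; nlinarith [this]
  have hδ : 0 < t*(1-t)*(1-q a)*(1-q b) := by
    apply mul_pos (mul_pos (mul_pos ht0 (by linarith)) (by linarith)); linarith
  have hmain := strict_combo ht0 ht1
    (mul_nonneg (hq a).1 (hq b).1)
    (mul_le_one₀ (hq a).2 (hq b).1 (hq b).2)
    (Finset.prod_nonneg fun j _ => pow_nonneg (hq j).1 _)
    (Finset.prod_le_one (fun j _ => pow_nonneg (hq j).1 _) (fun j _ => pow_le_one₀ (hq j).1 (hq j).2))
    (Finset.prod_nonneg fun j _ => pow_nonneg (hx j).1 _)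
    (prodChord ht0.le ht1.le hq α' Finset.univ)
    (mul_nonneg (hx a).1 (hx b).1) hXbound hδ
  calc (∏ j, x j ^ α' j) * x a * x b = (x a * x b) * ∏ j, x j ^ α' j := by ring
  _ < (1-t)*((q a * q b) * ∏ j, q j ^ α' j) + t := hmain
  _ = (1-t)*((∏ j, q j ^ α' j) * q a * q b) + t := by ring


lemma prod_pow_factor_eq {n : ℕ} {y w : Fin n → ℝ} {α : Fin n → ℕ}
    (h0 : ∀ l, 0 ≤ y l) (hle : ∀ l, y l ≤ w l) (hpos : ∀ l, 0 < w l)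
    (heq : ∏ l, y l ^ α l = ∏ l, w l ^ α l) {j : Fin n} (hj : α j ≠ 0) : y j = w j := by
  by_contra hne
  have hlt : y j < w j := lt_of_le_of_ne (hle j) hne
  have h1 : ∏ l ∈ univ.erase j, y l ^ α l ≤ ∏ l ∈ univ.erase j, w l ^ α l :=
    Finset.prod_le_prod (fun l _ => pow_nonneg (h0 l) _) (fun l _ => pow_le_pow_left₀ (h0 l) (hle l) _)
  have h2 : y j ^ α j < w j ^ α j := pow_lt_pow_left₀ hlt (h0 j) hj
  have hpos2 : 0 < ∏ l ∈ univ.erase j, w l ^ α l := Finset.prod_pos fun l _ => pow_pos (hpos l) _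
  have hfin : ∏ l, y l ^ α l < ∏ l, w l ^ α l := by
    calc ∏ l, y l ^ α l = y j ^ α j * ∏ l ∈ univ.erase j, y l ^ α l :=
          (Finset.mul_prod_erase univ (fun l => y l ^ α l) (Finset.mem_univ j)).symm
    _ ≤ y j ^ α j * ∏ l ∈ univ.erase j, w l ^ α l :=
          mul_le_mul_of_nonneg_left h1 (pow_nonneg (h0 j) _)
    _ < w j ^ α j * ∏ l ∈ univ.erase j, w l ^ α l := mul_lt_mul_of_pos_right h2 hpos2
    _ = ∏ l, w l ^ α l := Finset.mul_prod_erase univ (fun l => w l ^ α l) (Finset.mem_univ j)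
  rw [heq] at hfin
  exact lt_irrefl _ hfin

lemma exists_two_factors {n : ℕ} (α : Fin n → ℕ) (h2 : 2 ≤ ∑ j, α j) :
    ∃ a b : Fin n, α a ≠ 0 ∧ α b ≠ 0 ∧ ∀ j, α j =
      (α j - (if j = a then 1 else 0) - (if j = b then 1 else 0))
        + (if j = a then 1 else 0) + (if j = b then 1 else 0) := by
  classical
  have ha : ∃ a, α a ≠ 0 := by
    by_contra h; push_neg at h
    rw [Finset.sum_eq_zero (fun j _ => h j)] at h2; omega
  obtain ⟨a, ha⟩ := ha
  by_cases h2a : 2 ≤ α a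
  · exact ⟨a, a, ha, ha, fun j => by by_cases hj : j = a <;> simp [hj] <;> omega⟩
  · have hrest : 1 ≤ ∑ j ∈ univ.erase a, α j := by
      have := Finset.add_sum_erase univ α (Finset.mem_univ a); omega
    have hb : ∃ b ∈ univ.erase a, α b ≠ 0 := by
      by_contra h; push_neg at h
      rw [Finset.sum_eq_zero h] at hrest; omega
    obtain ⟨b, hbmem, hb⟩ := hb
    have hab : b ≠ a := (Finset.mem_erase.1 hbmem).1
    refine ⟨a, b, ha, hb, fun j => ?_⟩
    by_cases hj : j = a
    · subst hj; simp [Ne.symm hab]; omega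
    · by_cases hj' : j = b
      · subst hj'; simp [hj]; omega
      · simp [hj, hj']

lemma exists_bscc {n : ℕ} (dep : Fin n → Fin n → Prop) (ld : Fin n → Prop)
    (T' : Finset (Fin n)) (hne : T'.Nonempty)
    (hclosed : ∀ i ∈ T', ∀ j, dep i j → j ∈ T')
    (hld : ∀ i ∈ T', ld i) : IsLDBottom dep ld := by
  classical
  set reach : Fin n → Finset (Fin n) :=
    fun i => univ.filter (fun j => Relation.ReflTransGen dep i j) with hreachdef
  have hmemreach : ∀ i j, j ∈ reach i ↔ Relation.ReflTransGen dep i j := by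
    intro i j; simp [hreachdef]
  have hreachT : ∀ i ∈ T', ∀ j, Relation.ReflTransGen dep i j → j ∈ T' := by
    intro i hi j h
    induction h with
    | refl => exact hi
    | tail _ hd ih => exact hclosed _ ih _ hd
  obtain ⟨i₀, hi₀, hmin⟩ := Finset.exists_min_image T' (fun i => (reach i).card) hne
  refine ⟨↑(reach i₀), ⟨i₀, by simp only [Finset.mem_coe, hmemreach]; exact Relation.ReflTransGen.refl⟩, ?_, ?_, ?_⟩
  · intro i hi j hj
    have hiR : Relation.ReflTransGen dep i₀ i := (hmemreach i₀ i).1 hi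
    have hiT' : i ∈ T' := hreachT i₀ hi₀ i hiR
    have hsub : reach i ⊆ reach i₀ := by
      intro k hk
      exact (hmemreach i₀ k).2 (hiR.trans ((hmemreach i k).1 hk))
    have heq : reach i = reach i₀ := Finset.eq_of_subset_of_card_le hsub (hmin i hiT')
    have : j ∈ reach i := heq ▸ (hj : j ∈ reach i₀)
    exact (hmemreach i j).1 this
  · intro i hi j hd
    exact (hmemreach i₀ j).2 (Relation.ReflTransGen.tail ((hmemreach i₀ i).1 hi) hd)
  · intro i hi
    exact hld i (hreachT i₀ hi₀ i ((hmemreach i₀ i).1 hi))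

lemma ProbPoly.eval_nonneg {n : ℕ} (Q : ProbPoly n) {x : Fin n → ℝ}
    (hx : ∀ i, 0 ≤ x i) : 0 ≤ Q.eval x :=
  Finset.sum_nonneg fun r _ => mul_nonneg (Q.p_nonneg r)
    (Finset.prod_nonneg fun i _ => pow_nonneg (hx i) _)

lemma ProbPoly.eval_le_one {n : ℕ} (Q : ProbPoly n) {x : Fin n → ℝ}
    (hx : ∀ i, 0 ≤ x i ∧ x i ≤ 1) : Q.eval x ≤ 1 := by
  refine le_trans (Finset.sum_le_sum fun r _ => ?_) Q.p_sum_le_one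
  exact mul_le_of_le_one_right (Q.p_nonneg r)
    (Finset.prod_le_one (fun i _ => pow_nonneg (hx i).1 _)
      (fun i _ => pow_le_one₀ (hx i).1 (hx i).2))

lemma ProbPoly.eval_mono {n : ℕ} (Q : ProbPoly n) {x z : Fin n → ℝ}
    (hx : ∀ i, 0 ≤ x i) (hxz : ∀ i, x i ≤ z i) : Q.eval x ≤ Q.eval z :=
  Finset.sum_le_sum fun r _ => mul_le_mul_of_nonneg_left
    (Finset.prod_le_prod (fun i _ => pow_nonneg (hx i) _)
      (fun i _ => pow_le_pow_left₀ (hx i) (hxz i) _)) (Q.p_nonneg r)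

lemma pps_lfp_le_prefixed {n : ℕ} (P : PPS n) (q : Fin n → ℝ) (hq : IsLFP P.eval q)
    (y : Fin n → ℝ) (hy : y ∈ box01 n) (hPy : P.eval y ≤ y) : q ≤ y := by
  classical
  have hybox : ∀ l, 0 ≤ y l ∧ y l ≤ 1 := hy
  set K : Set (Fin n → ℝ) := {x | x ∈ box01 n ∧ P.eval x ≤ x} with hKdef
  have hyK : y ∈ K := ⟨hy, hPy⟩
  have hbdd : ∀ i, BddBelow ((fun x => x i) '' K) := by
    intro i; refine ⟨0, ?_⟩; rintro z ⟨x, hx, rfl⟩; exact (hx.1 i).1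
  have hne : ∀ i, ((fun x => x i) '' K).Nonempty := fun i => ⟨y i, y, hyK, rfl⟩
  set m : Fin n → ℝ := fun i => sInf ((fun x => x i) '' K) with hmdef
  have hmle : ∀ x ∈ K, m ≤ x := fun x hx i => csInf_le (hbdd i) ⟨x, hx, rfl⟩
  have hm0 : ∀ i, 0 ≤ m i := fun i => le_csInf (hne i) (by rintro z ⟨x, hx, rfl⟩; exact (hx.1 i).1)
  have hmbox : m ∈ box01 n := fun i => ⟨hm0 i, le_trans (hmle y hyK i) (hybox i).2⟩
  have hPmm : P.eval m ≤ m := by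
    intro i
    refine le_csInf (hne i) ?_
    rintro z ⟨x, hx, rfl⟩
    exact le_trans ((P.poly i).eval_mono hm0 (hmle x hx)) (hx.2 i)
  have hPmbox : P.eval m ∈ box01 n := fun i =>
    ⟨(P.poly i).eval_nonneg hm0, (P.poly i).eval_le_one hmbox⟩
  have hPmK : P.eval m ∈ K :=
    ⟨hPmbox, fun i => (P.poly i).eval_mono (fun l => (hPmbox l).1) hPmm⟩
  have hfix : P.eval m = m := le_antisymm hPmm (hmle _ hPmK)
  exact le_trans (hq.2.2 m hmbox hfix) (hmle y hyK)


lemma ldf_postfixed_le_lfp {n : ℕ} (P : PPS n) (hLDF : P.IsLDF)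
    (q : Fin n → ℝ) (hq : IsLFP P.eval q)
    (y : Fin n → ℝ) (hy : y ∈ box01 n) (hy1 : ∀ i, y i < 1)
    (hPy : y ≤ P.eval y) : y ≤ q := by
  classical
  have hybox : ∀ l, 0 ≤ y l ∧ y l ≤ 1 := hy
  have hqbox : ∀ l, 0 ≤ q l ∧ q l ≤ 1 := hq.1
  have hqi : ∀ i, (P.poly i).eval q = q i := fun i => congrFun hq.2.1 i
  by_contra hcon
  have hcon' : ∃ i, q i < y i := by
    by_contra h; push_neg at h; exact hcon fun i => h i
  obtain ⟨i₀, hi₀⟩ := hcon'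
  clear hcon
  set r : Fin n → ℝ := fun i => (y i - q i) / (1 - q i) with hrdef
  obtain ⟨i₁, -, hmax⟩ := Finset.exists_max_image Finset.univ r ⟨i₀, Finset.mem_univ _⟩
  set t : ℝ := r i₁ with htdef
  have ht0 : 0 < t := by
    have h1 : 0 < r i₀ := div_pos (by linarith) (by linarith [hy1 i₀, (hqbox i₀).2, hi₀])
    exact lt_of_lt_of_le h1 (hmax i₀ (Finset.mem_univ _))
  have hq1 : q i₁ < 1 := by
    by_contra h; push_neg at h
    have he : (1 : ℝ) - q i₁ = 0 := by linarith [(hqbox i₁).2]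
    have : t = 0 := by rw [htdef, hrdef]; simp [he]
    linarith
  have ht1 : t < 1 := by
    have : (y i₁ - q i₁) / (1 - q i₁) < 1 := by
      rw [div_lt_one (by linarith)]; linarith [hy1 i₁]
    exact this
  set w : Fin n → ℝ := fun j => q j + t * (1 - q j) with hwdef
  have hyw : ∀ j, y j ≤ w j := by
    intro j
    by_cases hj : q j < 1
    · have h1 : r j ≤ t := hmax j (Finset.mem_univ _)
      have h2 : y j - q j ≤ t * (1 - q j) := by
        have h1' : (y j - q j) / (1 - q j) ≤ t := h1
        rw [div_le_iff₀ (by linarith)] at h1'; linarith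
      simp only [hwdef]; linarith
    · push_neg at hj
      have : q j = 1 := le_antisymm (hqbox j).2 hj
      simp only [hwdef, this]; linarith [hy1 j]
  have hwbox : ∀ j, 0 ≤ w j ∧ w j ≤ 1 := by
    intro j
    constructor <;> (simp only [hwdef]; nlinarith [(hqbox j).1, (hqbox j).2])
  have hwpos : ∀ j, 0 < w j := by
    intro j; simp only [hwdef]; nlinarith [(hqbox j).1, (hqbox j).2]
  set T : Finset (Fin n) := Finset.univ.filter (fun i => q i < 1 ∧ y i = w i) with hTdef
  have hi₁T : i₁ ∈ T := by
    refine Finset.mem_filter.2 ⟨Finset.mem_univ _, hq1, ?_⟩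
    have hcan : (y i₁ - q i₁) / (1 - q i₁) * (1 - q i₁) = y i₁ - q i₁ :=
      div_mul_cancel₀ _ (by linarith : (1:ℝ) - q i₁ ≠ 0)
    simp only [hwdef, htdef, hrdef]
    linarith [hcan]
  -- main per-coordinate equalities on T
  have hchord : ∀ (i : Fin n) (r' : Fin (P.poly i).numTerms),
      ∏ j, w j ^ (P.poly i).expo r' j ≤ (1-t) * ∏ j, q j ^ (P.poly i).expo r' j + t := by
    intro i r'
    have := prodChord ht0.le ht1.le hqbox ((P.poly i).expo r') Finset.univ
    simpa [hwdef] using this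
  have hyprod : ∀ (i : Fin n) (r' : Fin (P.poly i).numTerms),
      ∏ j, y j ^ (P.poly i).expo r' j ≤ ∏ j, w j ^ (P.poly i).expo r' j := by
    intro i r'
    exact Finset.prod_le_prod (fun j _ => pow_nonneg (hybox j).1 _)
      (fun j _ => pow_le_pow_left₀ (hybox j).1 (hyw j) _)
  have hKey : ∀ i ∈ T, (∑ r', (P.poly i).p r') = 1 ∧
      (∀ r', (P.poly i).p r' ≠ 0 →
        ∏ j, y j ^ (P.poly i).expo r' j = ∏ j, w j ^ (P.poly i).expo r' j) ∧
      (∀ r', (P.poly i).p r' ≠ 0 →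
        ∏ j, w j ^ (P.poly i).expo r' j = (1-t) * ∏ j, q j ^ (P.poly i).expo r' j + t) := by
    intro i hiT
    obtain ⟨-, hqi1, hyiw⟩ := Finset.mem_filter.1 hiT
    have hyPy : y i ≤ (P.poly i).eval y := hPy i
    have hA : (P.poly i).eval y ≤ (P.poly i).eval w :=
      (P.poly i).eval_mono (fun l => (hybox l).1) hyw
    have hB : (P.poly i).eval w ≤ ∑ r', (P.poly i).p r' * ((1-t) * ∏ j, q j ^ (P.poly i).expo r' j + t) :=
      Finset.sum_le_sum fun r' _ => mul_le_mul_of_nonneg_left (hchord i r') ((P.poly i).p_nonneg r')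
    have hC : ∑ r', (P.poly i).p r' * ((1-t) * ∏ j, q j ^ (P.poly i).expo r' j + t)
        = (1-t) * (P.poly i).eval q + t * ∑ r', (P.poly i).p r' := by
      unfold ProbPoly.eval
      rw [Finset.mul_sum, Finset.mul_sum, ← Finset.sum_add_distrib]
      exact Finset.sum_congr rfl fun r' _ => by ring
    rw [hC, hqi i] at hB
    have hD : (1-t) * q i + t * ∑ r', (P.poly i).p r' ≤ (1-t) * q i + t := by
      nlinarith [(P.poly i).p_sum_le_one, ht0]
    have hwi : w i = (1-t) * q i + t := by simp only [hwdef]; ring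
    -- all inequalities are equalities
    have hsum1 : (∑ r', (P.poly i).p r') = 1 := by
      have hge : (1:ℝ) ≤ ∑ r', (P.poly i).p r' := by nlinarith [hy1 i]
      exact le_antisymm (P.poly i).p_sum_le_one hge
    have heq2 : (P.poly i).eval y = (P.poly i).eval w := by
      have : (P.poly i).eval w ≤ y i := by nlinarith
      exact le_antisymm hA (le_trans this hyPy)
    have heq3 : (P.poly i).eval w = ∑ r', (P.poly i).p r' * ((1-t) * ∏ j, q j ^ (P.poly i).expo r' j + t) := by
      have hub : ∑ r', (P.poly i).p r' * ((1-t) * ∏ j, q j ^ (P.poly i).expo r' j + t) ≤ (P.poly i).eval w := by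
        rw [hC, hqi i]
        have : (P.poly i).eval w ≥ y i := le_trans hyPy hA
        nlinarith
      refine le_antisymm ?_ hub
      exact Finset.sum_le_sum fun r' _ => mul_le_mul_of_nonneg_left (hchord i r') ((P.poly i).p_nonneg r')
    refine ⟨hsum1, ?_, ?_⟩
    · -- per-term y-prod = w-prod
      have hzero : ∑ r', (P.poly i).p r' * (∏ j, w j ^ (P.poly i).expo r' j - ∏ j, y j ^ (P.poly i).expo r' j) = 0 := by
        have hsplit : ∑ r', (P.poly i).p r' * (∏ j, w j ^ (P.poly i).expo r' j - ∏ j, y j ^ (P.poly i).expo r' j)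
            = (P.poly i).eval w - (P.poly i).eval y := by
          unfold ProbPoly.eval
          rw [← Finset.sum_sub_distrib]
          exact Finset.sum_congr rfl fun r' _ => by ring
        rw [hsplit, heq2, sub_self]
      have := (Finset.sum_eq_zero_iff_of_nonneg (fun r' _ =>
        mul_nonneg ((P.poly i).p_nonneg r') (sub_nonneg.2 (hyprod i r')))).1 hzero
      intro r' hr'
      have h0 := this r' (Finset.mem_univ r')
      rcases mul_eq_zero.1 h0 with h | h
      · exact absurd h hr'
      · linarith [sub_eq_zero.1 h]
    · -- per-term w-prod = chord
      have hzero : ∑ r', (P.poly i).p r' * (((1-t) * ∏ j, q j ^ (P.poly i).expo r' j + t) - ∏ j, w j ^ (P.poly i).expo r' j) = 0 := by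
        have hsplit : ∑ r', (P.poly i).p r' * (((1-t) * ∏ j, q j ^ (P.poly i).expo r' j + t) - ∏ j, w j ^ (P.poly i).expo r' j)
            = (∑ r', (P.poly i).p r' * ((1-t) * ∏ j, q j ^ (P.poly i).expo r' j + t)) - (P.poly i).eval w := by
          unfold ProbPoly.eval
          rw [← Finset.sum_sub_distrib]
          exact Finset.sum_congr rfl fun r' _ => by ring
        rw [hsplit, ← heq3, sub_self]
      have := (Finset.sum_eq_zero_iff_of_nonneg (fun r' _ =>
        mul_nonneg ((P.poly i).p_nonneg r') (sub_nonneg.2 (hchord i r')))).1 hzero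
      intro r' hr'
      have h0 := this r' (Finset.mem_univ r')
      rcases mul_eq_zero.1 h0 with h | h
      · exact absurd h hr'
      · linarith [sub_eq_zero.1 h]
  -- dependencies of T stay in T
  have hdepT : ∀ i ∈ T, ∀ r', (P.poly i).p r' ≠ 0 → ∀ j, (P.poly i).expo r' j ≠ 0 → j ∈ T := by
    intro i hiT r' hr' j hj
    have heqp := (hKey i hiT).2.1 r' hr'
    have hyjwj : y j = w j :=
      prod_pow_factor_eq (fun l => (hybox l).1) hyw hwpos heqp hj
    have hqj : q j < 1 := by
      by_contra h; push_neg at h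
      have hq1' : q j = 1 := le_antisymm (hqbox j).2 h
      have : w j = 1 := by simp [hwdef, hq1']
      linarith [hy1 j]
    exact Finset.mem_filter.2 ⟨Finset.mem_univ j, hqj, hyjwj⟩
  -- each term of a T-polynomial has total degree at most 1
  have hdeg : ∀ i ∈ T, ∀ r', (P.poly i).p r' ≠ 0 → ∑ j, (P.poly i).expo r' j ≤ 1 := by
    intro i hiT r' hr'
    by_contra hge; push_neg at hge
    obtain ⟨a, b, ha, hb, hdec⟩ := exists_two_factors ((P.poly i).expo r') (by omega)
    have hqa : q a < 1 := (Finset.mem_filter.1 (hdepT i hiT r' hr' a ha)).2.1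
    have hqb : q b < 1 := (Finset.mem_filter.1 (hdepT i hiT r' hr' b hb)).2.1
    have hstrict := prodChord_strict ht0 ht1 hqbox
      (fun j => (P.poly i).expo r' j - (if j = a then 1 else 0) - (if j = b then 1 else 0)) a b hqa hqb
    have hw := (hKey i hiT).2.2 r' hr'
    have hrw1 : ∏ j, w j ^ (P.poly i).expo r' j
        = ∏ j, (q j + t * (1 - q j)) ^
          (((P.poly i).expo r' j - (if j = a then 1 else 0) - (if j = b then 1 else 0))
            + (if j = a then 1 else 0) + (if j = b then 1 else 0)) := by
      simp only [hwdef]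
      exact Finset.prod_congr rfl fun j _ => by rw [← hdec j]
    have hrw2 : ∏ j, q j ^ (P.poly i).expo r' j
        = ∏ j, q j ^
          (((P.poly i).expo r' j - (if j = a then 1 else 0) - (if j = b then 1 else 0))
            + (if j = a then 1 else 0) + (if j = b then 1 else 0)) := by
      exact Finset.prod_congr rfl fun j _ => by rw [← hdec j]
    rw [hrw1, hrw2] at hw
    linarith [hstrict, hw.ge]
  -- structure of terms: degree 0, or degree 1 with variable in T
  have hstruct : ∀ i ∈ T, ∀ r', (P.poly i).p r' ≠ 0 →
      (∀ j, (P.poly i).expo r' j = 0) ∨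
      (∃ j, j ∈ T ∧ (P.poly i).expo r' j = 1 ∧ ∀ l, l ≠ j → (P.poly i).expo r' l = 0) := by
    intro i hiT r' hr'
    by_cases hz : ∀ j, (P.poly i).expo r' j = 0
    · exact Or.inl hz
    · right
      push_neg at hz; obtain ⟨j, hj⟩ := hz
      have hjT : j ∈ T := hdepT i hiT r' hr' j hj
      have hsum := hdeg i hiT r' hr'
      have hle : (P.poly i).expo r' j ≤ ∑ l, (P.poly i).expo r' l := by
        simpa using Finset.single_le_sum (f := fun l => (P.poly i).expo r' l)
          (fun _ _ => Nat.zero_le _) (Finset.mem_univ j)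
      have hj1 : (P.poly i).expo r' j = 1 := by omega
      refine ⟨j, hjT, hj1, fun l hl => ?_⟩
      have hsub : (P.poly i).expo r' j + (P.poly i).expo r' l ≤ ∑ x, (P.poly i).expo r' x := by
        rw [← Finset.sum_pair (Ne.symm hl)]
        exact Finset.sum_le_sum_of_subset (Finset.subset_univ _)
      omega
  have hprod_eval : ∀ (i : Fin n) r' (j : Fin n), (P.poly i).expo r' j = 1 →
      (∀ l, l ≠ j → (P.poly i).expo r' l = 0) →
      ∏ l, q l ^ (P.poly i).expo r' l = q j := by
    intro i r' j h1 h0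
    rw [Finset.prod_eq_single j (fun l _ hl => by rw [h0 l hl, pow_zero])
      (fun h => absurd (Finset.mem_univ j) h), h1, pow_one]
  -- the argmax of 1 - q over T
  set c : Fin n → ℝ := fun i => 1 - q i with hcdef
  have hcq : ∀ i ∈ T, c i = ∑ r', (P.poly i).p r' * (1 - ∏ j, q j ^ (P.poly i).expo r' j) := by
    intro i hiT
    have h1 : ∑ r', (P.poly i).p r' * (1 - ∏ j, q j ^ (P.poly i).expo r' j)
        = (∑ r', (P.poly i).p r') - (P.poly i).eval q := by
      unfold ProbPoly.eval
      rw [← Finset.sum_sub_distrib]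
      exact Finset.sum_congr rfl fun r' _ => by ring
    rw [h1, (hKey i hiT).1, hqi i]
  obtain ⟨i₂, hi₂T, hmax2⟩ := Finset.exists_max_image T c ⟨i₁, hi₁T⟩
  have hm0 : 0 < c i₂ := by
    have h1 : 0 < c i₁ := by simp only [hcdef]; linarith
    exact lt_of_lt_of_le h1 (hmax2 i₁ hi₁T)
  set T' : Finset (Fin n) := T.filter (fun i => c i = c i₂) with hT'def
  have hi₂T' : i₂ ∈ T' := Finset.mem_filter.2 ⟨hi₂T, rfl⟩
  have hT'key : ∀ i ∈ T', ∀ r', (P.poly i).p r' ≠ 0 →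
      ∃ j, j ∈ T' ∧ (P.poly i).expo r' j = 1 ∧ ∀ l, l ≠ j → (P.poly i).expo r' l = 0 := by
    intro i hiT' r' hr'
    obtain ⟨hiT, hci⟩ := Finset.mem_filter.1 hiT'
    have hble : ∀ s', (P.poly i).p s' ≠ 0 →
        1 - ∏ j, q j ^ (P.poly i).expo s' j ≤ c i₂ := by
      intro s' hs'
      rcases hstruct i hiT s' hs' with h | ⟨j, hjT, h1, h0⟩
      · rw [Finset.prod_eq_one (fun l _ => by rw [h l, pow_zero])]; linarith
      · rw [hprod_eval i s' j h1 h0]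
        calc 1 - q j = c j := by simp only [hcdef]
        _ ≤ c i₂ := hmax2 j hjT
    have hsumz : ∑ s', (P.poly i).p s' * (c i₂ - (1 - ∏ j, q j ^ (P.poly i).expo s' j)) = 0 := by
      have hsplit : ∑ s', (P.poly i).p s' * (c i₂ - (1 - ∏ j, q j ^ (P.poly i).expo s' j))
          = (∑ s', (P.poly i).p s') * c i₂ - ∑ s', (P.poly i).p s' * (1 - ∏ j, q j ^ (P.poly i).expo s' j) := by
        rw [Finset.sum_mul, ← Finset.sum_sub_distrib]
        exact Finset.sum_congr rfl fun s' _ => by ring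
      rw [hsplit, (hKey i hiT).1, one_mul, ← hcq i hiT, hci, sub_self]
    have hallz := (Finset.sum_eq_zero_iff_of_nonneg (fun s' _ => by
      by_cases hps : (P.poly i).p s' = 0
      · rw [hps, zero_mul]
      · exact mul_nonneg ((P.poly i).p_nonneg s') (sub_nonneg.2 (hble s' hps)))).1 hsumz
    have hz := hallz r' (Finset.mem_univ r')
    have heqm : 1 - ∏ j, q j ^ (P.poly i).expo r' j = c i₂ := by
      rcases mul_eq_zero.1 hz with h | h
      · exact absurd h hr'
      · linarith [sub_eq_zero.1 h]
    rcases hstruct i hiT r' hr' with h | ⟨j, hjT, h1, h0⟩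
    · exfalso
      rw [Finset.prod_eq_one (fun l _ => by rw [h l, pow_zero])] at heqm
      rw [← heqm] at hm0
      norm_num at hm0
    · refine ⟨j, Finset.mem_filter.2 ⟨hjT, ?_⟩, h1, h0⟩
      rw [hprod_eval i r' j h1 h0] at heqm
      exact heqm
  have hT'LD : ∀ i ∈ T', IsLDPoly (P.poly i) := by
    intro i hiT'
    obtain ⟨hiT, -⟩ := Finset.mem_filter.1 hiT'
    refine ⟨fun r' hr' => ?_, (hKey i hiT).1⟩
    obtain ⟨j, hjT', h1, h0⟩ := hT'key i hiT' r' hr'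
    rw [Finset.sum_eq_single j (fun l _ hl => h0 l hl) (fun h => absurd (Finset.mem_univ j) h), h1]
  have hT'closed : ∀ i ∈ T', ∀ j, P.depends i j → j ∈ T' := by
    rintro i hiT' j ⟨r', hr', hj⟩
    obtain ⟨j', hj'T', h1, h0⟩ := hT'key i hiT' r' hr'
    have hjj : j = j' := by
      by_contra hne; exact hj (h0 j hne)
    rwa [hjj]
  exact hLDF (exists_bscc P.depends _ T' ⟨i₂, hi₂T'⟩ hT'closed hT'LD)

end Aux

/-- For an LDF-PPS with least fixed point `q*`, and any `y ∈ [0,1]^n`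
with `y < 1` in every coordinate: if `P(y) ≤ y` then `y ≥ q*`, and if `P(y) ≥ y`
then `y ≤ q*`. In particular, if `q* < 1` in every coordinate, then `q*` is the
only fixed point of `P` in `[0,1]^n` that is `< 1` in every coordinate. -/
theorem ldf_pps_lfp_comparison {n : ℕ} (P : PPS n) (hLDF : P.IsLDF)
    (q : Fin n → ℝ) (hq : IsLFP P.eval q) :
    (∀ y ∈ box01 n, (∀ i, y i < 1) →
      ((P.eval y ≤ y → q ≤ y) ∧ (y ≤ P.eval y → y ≤ q))) ∧
    ((∀ i, q i < 1) →
      ∀ q' ∈ box01 n, P.eval q' = q' → (∀ i, q' i < 1) → q' = q) := by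
  constructor
  · intro y hy hy1
    exact ⟨fun h => pps_lfp_le_prefixed P q hq y hy h,
           fun h => ldf_postfixed_le_lfp P hLDF q hq y hy hy1 h⟩
  · intro _ q' hq'box hfix hq'1
    exact le_antisymm
      (ldf_postfixed_le_lfp P hLDF q hq q' hq'box hq'1 (le_of_eq hfix.symm))
      (pps_lfp_le_prefixed P q hq q' hq'box (le_of_eq hfix))
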